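/- Let P be a Sylow p-subgroup of a finite group G and let Z be a subgroup with Z ≤ P ∩ Z(G). Assume that P is either abelian or splits over Z (i.e., Z has a complement in P). Then Z ∩ [G,G] = 1. -/

import Mathlib

open Subgroup

/-- A central subgroup with a complement admits a retraction. -/
lemma exists_retraction_of_central_complement {G : Type} [Group G]
    (Pg Z K : Subgroup G) (hZc : Z ≤ Subgroup.center G)
    (hinf : Z ⊓ K = ⊥) (hsup : Z ⊔ K = Pg) :
    ∃ ϕ : Pg →* Z, ∀ (z : G) (hz : z ∈ Z) (hzP : z ∈ Pg), ϕ ⟨z, hzP⟩ = ⟨z, hz⟩ := by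
  haveI hZn : Z.Normal := by
    constructor
    intro n hn g
    rw [Subgroup.mem_center_iff.mp (hZc hn) g, mul_assoc, mul_inv_cancel, mul_one]
    exact hn
  have hdecomp : ∀ pp : Pg, ∃ zz : Z, ∃ kk : K, (zz : G) * (kk : G) = (pp : G) := by
    intro pp
    have hmem : (pp : G) ∈ (↑(Z ⊔ K) : Set G) := by rw [hsup]; exact pp.2
    rw [Subgroup.normal_mul] at hmem
    obtain ⟨z, hz, k, hk, hzk⟩ := hmem
    exact ⟨⟨z, hz⟩, ⟨k, hk⟩, hzk⟩
  have huniq : ∀ (z1 z2 : Z) (k1 k2 : K),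
      (z1 : G) * (k1 : G) = (z2 : G) * (k2 : G) → z1 = z2 := by
    intro z1 z2 k1 k2 h
    have h1 : ((z2 : G)⁻¹ * z1 : G) = (k2 : G) * (k1 : G)⁻¹ := by
      have h' := congrArg (fun x => (z2 : G)⁻¹ * x * (k1 : G)⁻¹) h
      simpa [mul_assoc] using h'
    have h2 : ((z2 : G)⁻¹ * z1) ∈ Z ⊓ K := by
      constructor
      · exact Z.mul_mem (Z.inv_mem z2.2) z1.2
      · rw [h1]; exact K.mul_mem k2.2 (K.inv_mem k1.2)
    rw [hinf, Subgroup.mem_bot, inv_mul_eq_one] at h2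
    exact Subtype.ext h2.symm
  classical
  set f : Pg → Z := fun pp => (hdecomp pp).choose with hf
  have hspec : ∀ pp : Pg, ∃ kk : K, (f pp : G) * (kk : G) = (pp : G) :=
    fun pp => (hdecomp pp).choose_spec
  refine ⟨MonoidHom.mk' f ?_, ?_⟩
  · intro a b
    obtain ⟨ka, hka⟩ := hspec a
    obtain ⟨kb, hkb⟩ := hspec b
    obtain ⟨kab, hkab⟩ := hspec (a * b)
    refine huniq _ _ kab (ka * kb) ?_
    have hc : (f b : G) * (ka : G) = (ka : G) * (f b : G) :=
      (Subgroup.mem_center_iff.mp (hZc (f b).2) ka).symm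
    push_cast
    rw [hkab]
    push_cast
    rw [← hka, ← hkb]
    rw [mul_assoc, ← mul_assoc (ka : G), ← hc]
    group
  · intro z hz hzP
    obtain ⟨k, hk⟩ := hspec ⟨z, hzP⟩
    refine huniq _ _ k 1 ?_
    show ((f ⟨z, hzP⟩ : Z) : G) * (k : G) = _
    rw [hk]
    simp

/-- Let `P` be a Sylow `p`-subgroup of a finite group `G` and `Z ≤ P ∩ Z(G)`. If `P` is
abelian or splits over `Z`, then `Z ∩ [G, G] = 1`. -/
theorem inf_commutator_eq_bot_of_central_sylow_split
    (p : ℕ) (hp : p.Prime) (G : Type) [Group G] [Finite G]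
    (P : Sylow p G) (Z : Subgroup G)
    (hZ : Z ≤ (P : Subgroup G) ⊓ Subgroup.center G)
    (hPab : IsMulCommutative (P : Subgroup G) ∨
      ∃ K : Subgroup G, K ≤ (P : Subgroup G) ∧ Z ⊓ K = ⊥ ∧ Z ⊔ K = (P : Subgroup G)) :
    Z ⊓ commutator G = ⊥ := by
  haveI : Fact p.Prime := ⟨hp⟩
  rw [eq_bot_iff]
  intro z hzm
  obtain ⟨hzZ, hzC⟩ := hzm
  have hzP : z ∈ (P : Subgroup G) := (hZ hzZ).1
  have hzc : z ∈ Subgroup.center G := (hZ hzZ).2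
  rw [Subgroup.mem_bot]
  -- the transfer key hypothesis holds for central elements
  have key : ∀ (k : ℕ) (g₀ : G), g₀⁻¹ * z ^ k * g₀ ∈ (P : Subgroup G) →
      g₀⁻¹ * z ^ k * g₀ = z ^ k := by
    intro k g₀ _
    have : z ^ k ∈ Subgroup.center G := Subgroup.pow_mem _ hzc k
    rw [Subgroup.mem_center_iff.mp this g₀⁻¹, mul_assoc, inv_mul_cancel, mul_one]
  -- main step: z ^ index = 1
  suffices hpow : z ^ (P : Subgroup G).index = 1 by
    have h1 : orderOf z ∣ (P : Subgroup G).index := orderOf_dvd_of_pow_eq_one hpow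
    obtain ⟨k, hk⟩ := P.2 ⟨z, hzP⟩
    have h2 : orderOf z ∣ p ^ k := by
      apply orderOf_dvd_of_pow_eq_one
      have := congrArg (Subtype.val) hk
      push_cast at this
      exact this
    have hcop : Nat.Coprime (p ^ k) (P : Subgroup G).index :=
      Nat.Coprime.pow_left k ((Nat.Prime.coprime_iff_not_dvd hp).mpr P.not_dvd_index)
    have hd1 : orderOf z ∣ 1 := hcop ▸ Nat.dvd_gcd h2 h1
    exact orderOf_eq_one_iff.mp (Nat.dvd_one.mp hd1)
  rcases hPab with hab | ⟨K, hKP, hinf, hsup⟩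
  · -- abelian case: transfer to P itself
    letI : CommGroup ↥(P : Subgroup G) :=
      { (inferInstance : Group ↥(P : Subgroup G)) with mul_comm := hab.is_comm.comm }
    have h1 := MonoidHom.transfer_eq_pow (MonoidHom.id ↥(P : Subgroup G)) z key
    have h2 : MonoidHom.transfer (MonoidHom.id ↥(P : Subgroup G)) z = 1 :=
      Abelianization.commutator_subset_ker _ hzC
    rw [h2] at h1
    have := congrArg Subtype.val h1.symm
    simpa using this
  · -- split case: transfer to Z via the retraction
    haveI : IsMulCommutative Z :=
      ⟨⟨fun a b => Subtype.ext ((Subgroup.mem_center_iff.mp (hZ a.2).2 b).symm)⟩⟩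
    letI : CommGroup ↥Z :=
      { (inferInstance : Group ↥Z) with mul_comm := (IsMulCommutative.is_comm (M := ↥Z)).comm }
    obtain ⟨ϕ, hϕ⟩ := exists_retraction_of_central_complement (P : Subgroup G) Z K
      (le_inf_iff.mp hZ |>.2) hinf hsup
    have h1 := MonoidHom.transfer_eq_pow ϕ z key
    have h2 : MonoidHom.transfer ϕ z = 1 :=
      Abelianization.commutator_subset_ker _ hzC
    rw [h2, hϕ _ (Z.pow_mem hzZ _)] at h1
    have := congrArg Subtype.val h1.symm
    simpa using this
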